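/- Let (Ω, μ) be a probability space, a ≥ 1 an integer, X_1, …, X_a : Ω → ℕ independent random variables, k_1, …, k_a positive integers, and ε a real with 0 ≤ ε ≤ a. If μ(X_i ≥ k_i) ≤ ε/a for every i, then μ(X_1 + ⋯ + X_a ≥ k_1 + ⋯ + k_a) ≤ 1 - ∏_{i=1}^{a} (1 - ε/a) ≤ ε. -/

import Mathlib

open MeasureTheory ProbabilityTheory

/-- **Composition of simultaneous games (Theorem 6).**
If `X_1, …, X_a` are independent ℕ-valued random variables on a probability space,
`k_1, …, k_a` are positive integers, and each `μ(X_i ≥ k_i) ≤ ε/a`, then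
`μ(X_1 + ⋯ + X_a ≥ k_1 + ⋯ + k_a) ≤ 1 - ∏_{i=1}^a (1 - ε/a) ≤ ε`. -/
theorem composition_of_simultaneous_games
    {Ω : Type*} [MeasurableSpace Ω] (μ : Measure Ω) [IsProbabilityMeasure μ]
    (a : ℕ) (ha : 1 ≤ a)
    (X : Fin a → Ω → ℕ)
    (hXmeas : ∀ i, Measurable (X i))
    (hXindep : iIndepFun X μ)
    (k : Fin a → ℕ) (hk : ∀ i, 1 ≤ k i)
    (ε : ℝ) (hε0 : 0 ≤ ε) (hεa : ε ≤ (a : ℝ))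
    (hbound : ∀ i, (μ {ω | k i ≤ X i ω}).toReal ≤ ε / (a : ℝ)) :
    (μ {ω | (∑ i, k i) ≤ ∑ i, X i ω}).toReal ≤ 1 - ∏ _i : Fin a, (1 - ε / (a : ℝ)) ∧
      1 - ∏ _i : Fin a, (1 - ε / (a : ℝ)) ≤ ε := by
  have hapos : (0 : ℝ) < a := by exact_mod_cast Nat.lt_of_lt_of_le Nat.zero_lt_one ha
  have hεa1 : ε / (a : ℝ) ≤ 1 := by
    rw [div_le_one hapos]; exact hεa
  have hεa0 : 0 ≤ ε / (a : ℝ) := by positivity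
  have key : ∀ (s : Set Ω), MeasurableSet s → (μ sᶜ).toReal = 1 - (μ s).toReal := by
    intro s hs
    rw [prob_compl_eq_one_sub hs, ENNReal.toReal_sub_of_le prob_le_one ENNReal.one_ne_top,
      ENNReal.toReal_one]
  -- the "safe" events
  set C : Fin a → Set Ω := fun i => {ω | X i ω < k i} with hC
  have hCmeas : ∀ i, MeasurableSet (C i) := fun i =>
    (hXmeas i) (measurableSet_lt measurable_id measurable_const)
  have hCinter : MeasurableSet (⋂ i, C i) := MeasurableSet.iInter hCmeas
  -- pigeonhole: the target event is inside the complement of ⋂ C i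
  have hsub : {ω | (∑ i, k i) ≤ ∑ i, X i ω} ⊆ (⋂ i, C i)ᶜ := by
    intro ω hω hmem
    simp only [Set.mem_iInter] at hmem
    have : (∑ i, X i ω) < ∑ i, k i :=
      Finset.sum_lt_sum_of_nonempty (Finset.univ_nonempty_iff.2
        ⟨⟨0, ha⟩⟩) (fun i _ => hmem i)
    exact absurd hω (not_le.2 this)
  -- independence gives product formula
  have hprod : μ (⋂ i, C i) = ∏ i, μ (C i) := by
    refine hXindep.meas_iInter fun i => ⟨{n | n < k i}, trivial, rfl⟩
  -- lower bound each μ (C i)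
  have hCi : ∀ i, 1 - ε / (a : ℝ) ≤ (μ (C i)).toReal := by
    intro i
    have hA : MeasurableSet {ω | k i ≤ X i ω} :=
      (hXmeas i) (measurableSet_le measurable_const measurable_id)
    have hcompl : C i = {ω | k i ≤ X i ω}ᶜ := by
      ext ω; simp [hC, not_le]
    rw [hcompl, key _ hA]
    have := hbound i
    linarith
  have hμCle : ∀ i, (μ (C i)).toReal ≤ 1 := fun i => by
    simpa using ENNReal.toReal_mono ENNReal.one_ne_top (prob_le_one (μ := μ) (s := C i))
  -- main bound
  have hmain : (μ {ω | (∑ i, k i) ≤ ∑ i, X i ω}).toReal ≤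
      1 - ∏ _i : Fin a, (1 - ε / (a : ℝ)) := by
    have h1 : (μ {ω | (∑ i, k i) ≤ ∑ i, X i ω}).toReal ≤ (μ (⋂ i, C i)ᶜ).toReal := by
      apply ENNReal.toReal_mono (measure_ne_top μ _)
      exact measure_mono hsub
    have h2 : (μ (⋂ i, C i)ᶜ).toReal = 1 - (μ (⋂ i, C i)).toReal := key _ hCinter
    have h3 : (μ (⋂ i, C i)).toReal = ∏ i, (μ (C i)).toReal := by
      rw [hprod, ENNReal.toReal_prod]
    have h4 : ∏ _i : Fin a, (1 - ε / (a : ℝ)) ≤ ∏ i, (μ (C i)).toReal :=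
      Finset.prod_le_prod (fun i _ => by linarith) (fun i _ => hCi i)
    rw [h2, h3] at h1
    linarith
  refine ⟨hmain, ?_⟩
  -- Bernoulli inequality part
  have hbern : 1 - ε ≤ (1 - ε / (a : ℝ)) ^ a := by
    have h := one_add_mul_le_pow (a := -(ε / (a : ℝ))) (by linarith) a
    have : (a : ℝ) * (ε / (a : ℝ)) = ε := by field_simp
    rw [mul_neg] at h
    calc 1 - ε = 1 + -((a : ℝ) * (ε / (a : ℝ))) := by rw [this]; ring
    _ ≤ (1 + -(ε / (a : ℝ))) ^ a := h
    _ = (1 - ε / (a : ℝ)) ^ a := by ring_nf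
  have : ∏ _i : Fin a, (1 - ε / (a : ℝ)) = (1 - ε / (a : ℝ)) ^ a := by
    simp [Finset.prod_const]
  rw [this]
  linarith
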